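/- Under the hypotheses below, N₁ ∩ N₂ = L. -/

import Mathlib

set_option synthInstance.maxHeartbeats 400000
set_option maxHeartbeats 1600000
open Equiv Finset Polynomial IntermediateField Module

private def Vfin : Finset (Equiv.Perm (Fin 4)) :=
  {1, swap 0 1 * swap 2 3, swap 0 2 * swap 1 3, swap 0 3 * swap 1 2}

set_option maxRecDepth 100000 in
private lemma s4_key (H K : Subgroup (Equiv.Perm (Fin 4))) (hn : H.Normal) (hle : H ≤ K)
    (hK : Nat.card K = 4) : H = ⊥ ∨ H = K := by
  by_cases hb : H = ⊥
  · exact Or.inl hb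
  right
  obtain ⟨g, hgH, hg1⟩ : ∃ g ∈ H, g ≠ 1 := by
    by_contra h
    push_neg at h
    exact hb (le_antisymm (fun x hx => by simpa using h x hx) bot_le)
  have hconj : ∀ σ : Equiv.Perm (Fin 4), σ * g * σ⁻¹ ∈ K :=
    fun σ => hle (hn.conj_mem g hgH σ)
  have hcard : (univ.image fun σ => σ * g * σ⁻¹).card ≤ 4 := by
    have hsub : ↑(univ.image fun σ => σ * g * σ⁻¹) ⊆ (K : Set (Equiv.Perm (Fin 4)))  := by
      intro x hx
      simp only [coe_image, Set.mem_image] at hx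
      obtain ⟨σ, -, rfl⟩ := hx
      exact hconj σ
    calc (univ.image fun σ => σ * g * σ⁻¹).card
        = (↑(univ.image fun σ => σ * g * σ⁻¹) : Set _).ncard := (Set.ncard_coe_finset _).symm
      _ ≤ (K : Set (Equiv.Perm (Fin 4))).ncard := Set.ncard_le_ncard hsub (Set.toFinite _)
      _ = Nat.card K := by exact Nat.card_coe_set_eq _
      _ = 4 := hK
  have hgV : g ∈ Vfin := by
    by_contra hgV
    have := (by decide : ∀ g : Equiv.Perm (Fin 4), g ∉ Vfin →
      4 < (univ.image fun σ => σ * g * σ⁻¹).card) g hgV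
    omega
  have hVH : ∀ h ∈ Vfin, h ∈ H := by
    intro h hhV
    by_cases hh1 : h = 1
    · exact hh1 ▸ H.one_mem
    · obtain ⟨σ, hσ⟩ := (by decide : ∀ g ∈ Vfin, g ≠ 1 → ∀ h ∈ Vfin, h ≠ 1 →
        ∃ σ, σ * g * σ⁻¹ = h) g hgV hg1 h hhV hh1
      exact hσ ▸ hn.conj_mem g hgH σ
  have hHcard : 4 ≤ Nat.card H := by
    have hsub : ↑Vfin ⊆ (H : Set (Equiv.Perm (Fin 4))) := fun x hx => hVH x hx
    calc (4 : ℕ) = Vfin.card := by decide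
      _ = (↑Vfin : Set _).ncard := (Set.ncard_coe_finset _).symm
      _ ≤ (H : Set (Equiv.Perm (Fin 4))).ncard := Set.ncard_le_ncard hsub (Set.toFinite _)
      _ = Nat.card H := by exact Nat.card_coe_set_eq _
  exact Subgroup.eq_of_le_of_card_ge hle (le_trans (le_of_eq hK) hHcard)

private lemma fd_of_isGalois_finite_aut (F E : Type*) [Field F] [Field E] [Algebra F E]
    [IsGalois F E] [Finite (E ≃ₐ[F] E)] : FiniteDimensional F E := by
  have hfd : FiniteDimensional
      (IntermediateField.fixedField (⊤ : Subgroup (E ≃ₐ[F] E))) E :=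
    inferInstanceAs (FiniteDimensional (FixedPoints.subfield (⊤ : Subgroup (E ≃ₐ[F] E)) E) E)
  have hbot : IntermediateField.fixedField (⊤ : Subgroup (E ≃ₐ[F] E)) = ⊥ := by
    refine le_antisymm (fun x hx => ?_) bot_le
    have hfix : ∀ σ : E ≃ₐ[F] E, σ x = x := fun σ => hx ⟨σ, trivial⟩
    rw [IntermediateField.mem_bot]
    have hint : IsIntegral F x := (IsGalois.to_normal (F := F) (E := E)).isIntegral x
    by_contra hxb
    have h2 : 2 ≤ (minpoly F x).natDegree := by
      rw [minpoly.two_le_natDegree_iff hint]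
      intro hmem; exact hxb (by simpa using hmem)
    have psep : (minpoly F x).Separable := Algebra.IsSeparable.isSeparable F x
    have psplit : Splits ((minpoly F x).map (algebraMap F E)) :=
      (IsGalois.to_normal (F := F) (E := E)).splits x
    have hcard : Fintype.card ((minpoly F x).rootSet E) = (minpoly F x).natDegree :=
      card_rootSet_eq_natDegree psep psplit
    have hxroot : x ∈ (minpoly F x).rootSet E := by
      rw [mem_rootSet]
      exact ⟨minpoly.ne_zero hint, minpoly.aeval F x⟩
    obtain ⟨⟨y, hy⟩, hyne⟩ := Fintype.exists_ne_of_one_lt_card (by rw [hcard]; omega)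
      (⟨x, hxroot⟩ : (minpoly F x).rootSet E)
    have hy' : y ∈ (minpoly F x).aroots E := by
      rwa [mem_rootSet, ← mem_aroots] at hy
    set φ : F⟮x⟯ →ₐ[F] E := (algHomAdjoinIntegralEquiv F hint).symm ⟨y, hy'⟩ with hφ
    have hφgen : φ (AdjoinSimple.gen F x) = y :=
      algHomAdjoinIntegralEquiv_symm_apply_gen F hint _
    set ψ : E →ₐ[F] E := φ.liftNormal E with hψ
    have hψx : ψ x = y := by
      have := AlgHom.liftNormal_commutes φ E (AdjoinSimple.gen F x)
      rwa [AdjoinSimple.algebraMap_gen, hφgen] at this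
    have : ψ x = x := hfix (AlgEquiv.ofBijective ψ (AlgHom.normal_bijective F E E ψ))
    exact hyne (Subtype.ext (show y = x by rw [← hψx, this]))
  rw [hbot] at hfd
  exact FiniteDimensional.trans F (⊥ : IntermediateField F E) E

/-- If `N₁ ≠ N₂` are Galois extensions of `ℚ` (inside a fixed algebraic closure) with
Galois group `S₄`, both containing a Galois extension `L/ℚ` of degree `6`, then
`N₁ ∩ N₂ = L`. -/
theorem inf_of_two_s4_fields_eq
    (L N₁ N₂ : IntermediateField ℚ (AlgebraicClosure ℚ))
    (hN₁ : IsGalois ℚ N₁) (hN₂ : IsGalois ℚ N₂)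
    (hG₁ : Nonempty ((N₁ ≃ₐ[ℚ] N₁) ≃* Equiv.Perm (Fin 4)))
    (hG₂ : Nonempty ((N₂ ≃ₐ[ℚ] N₂) ≃* Equiv.Perm (Fin 4)))
    (hL : IsGalois ℚ L) (hLdeg : Module.finrank ℚ L = 6)
    (hLN₁ : L ≤ N₁) (hLN₂ : L ≤ N₂) (hne : N₁ ≠ N₂) :
    N₁ ⊓ N₂ = L := by
  classical
  obtain ⟨e₁⟩ := hG₁
  obtain ⟨e₂⟩ := hG₂
  haveI fin₁ : Finite (↥N₁ ≃ₐ[ℚ] ↥N₁) := Finite.of_equiv _ e₁.symm.toEquiv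
  haveI fin₂ : Finite (↥N₂ ≃ₐ[ℚ] ↥N₂) := Finite.of_equiv _ e₂.symm.toEquiv
  haveI fd₁ : FiniteDimensional ℚ ↥N₁ := fd_of_isGalois_finite_aut ℚ ↥N₁
  haveI fd₂ : FiniteDimensional ℚ ↥N₂ := fd_of_isGalois_finite_aut ℚ ↥N₂
  have cardPerm : Nat.card (Equiv.Perm (Fin 4)) = 24 := by
    rw [Nat.card_eq_fintype_card, Fintype.card_perm, Fintype.card_fin]
    rfl
  have finrank₁ : Module.finrank ℚ ↥N₁ = 24 := by
    rw [← IsGalois.card_aut_eq_finrank ℚ ↥N₁,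
      Nat.card_congr e₁.toEquiv, cardPerm]
  have finrank₂ : Module.finrank ℚ ↥N₂ = 24 := by
    rw [← IsGalois.card_aut_eq_finrank ℚ ↥N₂,
      Nat.card_congr e₂.toEquiv, cardPerm]
  -- N₁ ⊓ N₂ is Galois over ℚ
  haveI hsepM : Algebra.IsSeparable ℚ ↥(N₁ ⊓ N₂) :=
    by convert (inferInstance : @Algebra.IsSeparable ℚ ↥(N₁ ⊓ N₂) _ _ (N₁ ⊓ N₂).algebra'); exact Subsingleton.elim _ _
  haveI hnorM : Normal ℚ ↥(N₁ ⊓ N₂) := by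
    have h1 : @Normal ℚ _ _ _ N₁.algebra' := by convert hN₁.to_normal; exact Subsingleton.elim _ _
    have h2 : @Normal ℚ _ _ _ N₂.algebra' := by convert hN₂.to_normal; exact Subsingleton.elim _ _
    convert (inferInstance : @Normal ℚ ↥(N₁ ⊓ N₂) _ _ (N₁ ⊓ N₂).algebra'); exact Subsingleton.elim _ _
  haveI hGalM : IsGalois ℚ ↥(N₁ ⊓ N₂) := ⟨⟩
  -- pull back to intermediate fields of N₁
  set M' : IntermediateField ℚ ↥N₁ := (N₁ ⊓ N₂).comap N₁.val with hM'def
  set L' : IntermediateField ℚ ↥N₁ := L.comap N₁.val with hL'def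
  have hMmap : M'.map N₁.val = N₁ ⊓ N₂ :=
    IntermediateField.map_comap_eq_self (by rw [IntermediateField.fieldRange_val]; exact inf_le_left)
  have hLmap : L'.map N₁.val = L :=
    IntermediateField.map_comap_eq_self (by rw [IntermediateField.fieldRange_val]; exact hLN₁)
  have eM : ↥M' ≃ₐ[ℚ] ↥(N₁ ⊓ N₂) :=
    (IntermediateField.equivMap M' N₁.val).trans (IntermediateField.equivOfEq hMmap)
  have eL : ↥L' ≃ₐ[ℚ] ↥L :=
    (IntermediateField.equivMap L' N₁.val).trans (IntermediateField.equivOfEq hLmap)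
  haveI hGalM' : IsGalois ℚ ↥M' := IsGalois.of_algEquiv eM.symm
  haveI hGalL' : IsGalois ℚ ↥L' := IsGalois.of_algEquiv eL.symm
  have hL'deg : Module.finrank ℚ ↥L' = 6 := by
    rw [eL.toLinearEquiv.finrank_eq]; exact hLdeg
  have hL'M' : L' ≤ M' := by
    intro x hx
    have hx' : (x : AlgebraicClosure ℚ) ∈ L := hx
    exact ⟨x.2, hLN₂ hx'⟩
  -- the corresponding subgroups
  set H : Subgroup (↥N₁ ≃ₐ[ℚ] ↥N₁) := M'.fixingSubgroup with hHdef
  set K : Subgroup (↥N₁ ≃ₐ[ℚ] ↥N₁) := L'.fixingSubgroup with hKdef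
  have HleK : H ≤ K := by
    intro σ hσ
    rw [IntermediateField.mem_fixingSubgroup_iff] at hσ ⊢
    exact fun x hx => hσ x (hL'M' hx)
  have hKcard : Nat.card K = 4 := by
    have h1 : Nat.card K = Module.finrank ↥L' ↥N₁ :=
      IsGalois.card_fixingSubgroup_eq_finrank L'
    have h2 : Module.finrank ℚ ↥L' * Module.finrank ↥L' ↥N₁ = Module.finrank ℚ ↥N₁ :=
      Module.finrank_mul_finrank ℚ ↥L' ↥N₁
    rw [h1]
    rw [hL'deg, finrank₁] at h2
    omega
  haveI : @IsGalois ℚ _ ↥M' _ M'.algebra' := by convert hGalM'; exact Subsingleton.elim _ _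
  haveI Hnormal : H.Normal := IsGalois.fixingSubgroup_normal_of_isGalois M'
  -- transfer along e₁
  have h2n : (H.map e₁.toMonoidHom).Normal := Hnormal.map e₁.toMonoidHom e₁.surjective
  have h2le : H.map e₁.toMonoidHom ≤ K.map e₁.toMonoidHom := Subgroup.map_mono HleK
  have h2card : Nat.card (K.map e₁.toMonoidHom) = 4 := by
    rw [← Nat.card_congr (Subgroup.equivMapOfInjective K e₁.toMonoidHom e₁.injective).toEquiv]
    exact hKcard
  rcases s4_key _ _ h2n h2le h2card with h | h
  · -- H = ⊥ : then N₁ ⊓ N₂ = N₁, contradiction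
    exfalso
    have hH : H = ⊥ := by
      apply Subgroup.map_injective (f := e₁.toMonoidHom) (by exact e₁.injective)
      rw [h, Subgroup.map_bot]
    have hfixM : IntermediateField.fixedField H = M' := IsGalois.fixedField_fixingSubgroup M'
    have htop : IntermediateField.fixedField (⊥ : Subgroup (↥N₁ ≃ₐ[ℚ] ↥N₁)) = ⊤ := by
      refine le_antisymm le_top (fun x _ => ?_)
      rintro ⟨σ, hσ⟩
      rw [Subgroup.mem_bot] at hσ
      subst hσ
      rfl
    rw [hH, htop] at hfixM
    have hN₁M : N₁ ⊓ N₂ = N₁ := by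
      rw [← hMmap, ← hfixM]
      ext x
      exact ⟨fun ⟨y, _, hy⟩ => hy ▸ y.2, fun hx => ⟨⟨x, hx⟩, trivial, rfl⟩⟩
    have hle : N₁ ≤ N₂ := inf_eq_left.mp hN₁M
    exact hne (IntermediateField.eq_of_le_of_finrank_eq hle (by rw [finrank₁, finrank₂]))
  · -- H = K : then M' = L', so N₁ ⊓ N₂ = L
    have hHK : H = K := Subgroup.map_injective (f := e₁.toMonoidHom) (by exact e₁.injective) h
    have hML : M' = L' := by
      rw [← IsGalois.fixedField_fixingSubgroup M', ← IsGalois.fixedField_fixingSubgroup L']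
      rw [← hHdef, ← hKdef, hHK]
    rw [← hMmap, hML, hLmap]
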